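/- arXiv:1307.4931 — 2 statements merged into one kernel-verified Lean document; each statement's English description precedes it below -/
import Mathlib

section
/- Define T(1, x) = min over k of x_k for any finite sequence x of N reals, and for n ≥ 2, T(n, x) = max over j ∈ {1,…,N−n+2} of T(n−1, x^{(j)}), where x^{(j)} is x with its j-th term deleted. Then for any finite sequence x of N reals and any n with 1 ≤ n ≤ N, T(n, x) equals the n-th smallest term of x, i.e., T(n, x) = x(σ(n)) for any permutation σ of {1,…,N} with x∘σ monotone nondecreasing. -/
open Finset


/-- `T n x` for a sequence `x` with `M` terms: `T 1 x` is the minimum of the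
values of `x`, and for `n ≥ 2`, `T n x` is the maximum over (1-based) indices
`j ∈ {1, …, M - n + 2}` of `T (n-1)` applied to `x` with its `j`-th term
deleted (deletion is composition with `Fin.succAbove`). -/
noncomputable def T : ℕ → {M : ℕ} → (Fin M → ℝ) → ℝ
  | 0, _, _ => 0
  | 1, _, x => sInf (Set.range x)
  | n + 2, 0, _ => 0
  | n + 2, M + 1, x =>
      sSup {y | ∃ j : Fin (M + 1), j.val + 1 ≤ (M + 1) - (n + 2) + 2 ∧
        y = T (n + 1) (x ∘ j.succAbove)}

private lemma count_mono {M : ℕ} {y : Fin M → ℝ} (hy : Monotone y)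
    (p : ℝ → Prop) [DecidablePred p] (hp : ∀ a b : ℝ, a ≤ b → p b → p a) (k : Fin M) :
    p (y k) ↔ (k : ℕ) + 1 ≤ (univ.filter fun i => p (y i)).card := by
  constructor
  · intro h
    have hsub : Finset.Iic k ⊆ univ.filter fun i => p (y i) := by
      intro i hi
      simp only [mem_Iic] at hi
      simp only [mem_filter, mem_univ, true_and]
      exact hp _ _ (hy hi) h
    have := Finset.card_le_card hsub
    rwa [Fin.card_Iic] at this
  · intro h
    by_contra hk
    have hsub : (univ.filter fun i => p (y i)) ⊆ Finset.Iio k := by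
      intro i hi
      simp only [mem_filter, mem_univ, true_and] at hi
      simp only [mem_Iio]
      by_contra hik
      exact hk (hp _ _ (hy (le_of_not_gt hik)) hi)
    have := Finset.card_le_card hsub
    rw [Fin.card_Iio] at this
    omega

private lemma count_perm {M : ℕ} (x : Fin M → ℝ) (σ : Equiv.Perm (Fin M))
    (p : ℝ → Prop) [DecidablePred p] :
    (univ.filter fun i => p (x (σ i))).card = (univ.filter fun i => p (x i)).card := by
  apply Finset.card_bij' (fun i _ => σ i) (fun i _ => σ.symm i) <;> simp

private lemma nth_iff {M : ℕ} (x : Fin M → ℝ) (σ : Equiv.Perm (Fin M)) (hσ : Monotone (x ∘ σ))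
    (p : ℝ → Prop) [DecidablePred p] (hp : ∀ a b : ℝ, a ≤ b → p b → p a) (k : Fin M) :
    p (x (σ k)) ↔ (k : ℕ) + 1 ≤ (univ.filter fun i => p (x i)).card := by
  rw [← count_perm x σ p]
  exact count_mono hσ p hp k

private lemma count_succAbove {M : ℕ} (x : Fin (M + 1) → ℝ) (j : Fin (M + 1))
    (p : ℝ → Prop) [DecidablePred p] :
    (univ.filter fun i : Fin M => p (x (j.succAbove i))).card
      = ((univ.filter fun i => p (x i)).erase j).card := by
  apply Finset.card_bij (fun i _ => j.succAbove i)
  · intro i hi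
    simp only [mem_filter, mem_univ, true_and] at hi
    simp only [mem_erase, mem_filter, mem_univ, true_and]
    exact ⟨Fin.succAbove_ne j i, hi⟩
  · intro a _ b _ h
    exact Fin.succAbove_right_injective h
  · intro b hb
    simp only [mem_erase, mem_filter, mem_univ, true_and] at hb
    obtain ⟨i, rfl⟩ := Fin.exists_succAbove_eq hb.1
    exact ⟨i, by simp [hb.2], rfl⟩

private lemma key (n : ℕ) : ∀ (M : ℕ) (x : Fin (M + 1) → ℝ) (σ : Equiv.Perm (Fin (M + 1))),
    Monotone (x ∘ σ) → 1 ≤ n → ∀ (hn : n ≤ M + 1),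
    T n x = x (σ ⟨n - 1, by omega⟩) := by
  induction n with
  | zero => intro M x σ _ h; omega
  | succ m IH =>
    intro M x σ hσ _ hn
    match m, IH with
    | 0, _ =>
      show sInf (Set.range x) = x (σ ⟨0, by omega⟩)
      apply le_antisymm
      · exact csInf_le (Set.Finite.bddBelow (Set.finite_range x)) ⟨σ ⟨0, by omega⟩, rfl⟩
      · apply le_csInf (Set.range_nonempty x)
        rintro b ⟨i, rfl⟩
        have h0 : (⟨0, by omega⟩ : Fin (M + 1)) ≤ σ.symm i := Fin.zero_le _
        have := hσ h0
        simpa using this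
    | m + 1, IH =>
      obtain ⟨K, rfl⟩ : ∃ K, M = K + 1 := ⟨M - 1, by omega⟩
      have hmK : m + 1 ≤ K + 1 := by omega
      set v := x (σ ⟨m + 1, by omega⟩) with hv
      -- the value of each deleted subsequence
      have hval : ∀ j : Fin (K + 1 + 1),
          T (m + 1) (x ∘ j.succAbove)
            = (x ∘ j.succAbove) (Tuple.sort (x ∘ j.succAbove) ⟨m, by omega⟩) := by
        intro j
        have := IH K (x ∘ j.succAbove) (Tuple.sort (x ∘ j.succAbove))
          (Tuple.monotone_sort _) (by omega) (by omega)
        simpa using this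
      have hA : m + 2 ≤ (univ.filter fun i => x i ≤ v).card := by
        have := (nth_iff x σ hσ (fun t => t ≤ v) (fun a b hab hb => hab.trans hb)
          ⟨m + 1, by omega⟩).mp (le_refl v)
        simp at this; omega
      have hB : (univ.filter fun i => x i < v).card ≤ m + 1 := by
        by_contra hc
        have := (nth_iff x σ hσ (fun t => t < v) (fun a b hab hb => lt_of_le_of_lt hab hb)
          ⟨m + 1, by omega⟩).mpr (by simp only [Fin.val_mk]; omega)
        exact absurd this (lt_irrefl v)
      -- upper bound
      have hub : ∀ j : Fin (K + 1 + 1), T (m + 1) (x ∘ j.succAbove) ≤ v := by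
        intro j
        rw [hval j]
        apply (nth_iff (x ∘ j.succAbove) (Tuple.sort _) (Tuple.monotone_sort _)
          (fun t => t ≤ v) (fun a b hab hb => hab.trans hb) ⟨m, by omega⟩).mpr
        have h2 : (univ.filter fun i => (x ∘ j.succAbove) i ≤ v).card
            = ((univ.filter fun i => x i ≤ v).erase j).card :=
          count_succAbove x j (fun t => t ≤ v)
        have h1 := Finset.pred_card_le_card_erase
          (s := univ.filter fun i => x i ≤ v) (a := j)
        simp only [Fin.val_mk]
        omega
      -- lower bound witness
      have hlb : ∃ j : Fin (K + 1 + 1), (j : ℕ) + 1 ≤ (K + 1 + 1) - (m + 2) + 2 ∧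
          v ≤ T (m + 1) (x ∘ j.succAbove) := by
        have hgood : ∀ j : Fin (K + 1 + 1),
            ((univ.filter fun i => x i < v).erase j).card ≤ m →
            v ≤ T (m + 1) (x ∘ j.succAbove) := by
          intro j hj
          rw [hval j]
          apply le_of_not_gt
          intro hlt
          have := (nth_iff (x ∘ j.succAbove) (Tuple.sort _) (Tuple.monotone_sort _)
            (fun t => t < v) (fun a b hab hb => lt_of_le_of_lt hab hb) ⟨m, by omega⟩).mp hlt
          have h2 : (univ.filter fun i => (x ∘ j.succAbove) i < v).card
              = ((univ.filter fun i => x i < v).erase j).card :=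
            count_succAbove x j (fun t => t < v)
          simp only [Fin.val_mk] at this
          omega
        by_cases hc : (univ.filter fun i => x i < v).card ≤ m
        · refine ⟨0, by simp, hgood 0 ?_⟩
          exact le_trans (Finset.card_le_card (Finset.erase_subset _ _)) hc
        · -- card = m + 1; find a small-index element of the filter
          have hcard : (univ.filter fun i => x i < v).card = m + 1 := by omega
          have hex : ∃ j ∈ univ.filter fun i => x i < v, (j : ℕ) ≤ K - m + 1 := by
            by_contra hno
            push_neg at hno
            have hsub := Finset.card_le_card_of_injOn (f := Fin.val)
              (s := univ.filter fun i => x i < v) (t := Finset.Ioc (K - m + 1) (K + 1))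
              (fun j hj => by
                simp only [Finset.mem_coe, Finset.mem_Ioc]
                exact ⟨hno j hj, by omega⟩)
              (fun a _ b _ h => Fin.val_injective h)
            rw [Nat.card_Ioc] at hsub
            omega
          obtain ⟨j, hjmem, hjle⟩ := hex
          refine ⟨j, by omega, hgood j ?_⟩
          rw [Finset.card_erase_of_mem hjmem]
          omega
      -- compute the sSup
      show sSup {y | ∃ j : Fin (K + 1 + 1), j.val + 1 ≤ (K + 1 + 1) - (m + 2) + 2 ∧
        y = T (m + 1) (x ∘ j.succAbove)} = v
      have hSeq : {y | ∃ j : Fin (K + 1 + 1), j.val + 1 ≤ (K + 1 + 1) - (m + 2) + 2 ∧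
          y = T (m + 1) (x ∘ j.succAbove)}
          = (fun j : Fin (K + 1 + 1) => T (m + 1) (x ∘ j.succAbove)) ''
            {j | j.val + 1 ≤ (K + 1 + 1) - (m + 2) + 2} := by
        ext y
        constructor
        · rintro ⟨j, hj, rfl⟩; exact ⟨j, hj, rfl⟩
        · rintro ⟨j, hj, rfl⟩; exact ⟨j, hj, rfl⟩
      obtain ⟨j₀, hj₀, hj₀v⟩ := hlb
      have hne : {y | ∃ j : Fin (K + 1 + 1), j.val + 1 ≤ (K + 1 + 1) - (m + 2) + 2 ∧
          y = T (m + 1) (x ∘ j.succAbove)}.Nonempty :=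
        ⟨T (m + 1) (x ∘ j₀.succAbove), j₀, hj₀, rfl⟩
      have hmem : T (m + 1) (x ∘ j₀.succAbove) ∈ {y | ∃ j : Fin (K + 1 + 1),
          j.val + 1 ≤ (K + 1 + 1) - (m + 2) + 2 ∧ y = T (m + 1) (x ∘ j.succAbove)} :=
        ⟨j₀, hj₀, rfl⟩
      have hbdd : BddAbove {y | ∃ j : Fin (K + 1 + 1),
          j.val + 1 ≤ (K + 1 + 1) - (m + 2) + 2 ∧ y = T (m + 1) (x ∘ j.succAbove)} := by
        refine ⟨v, ?_⟩
        rintro y ⟨j, _, rfl⟩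
        exact hub j
      apply le_antisymm
      · apply csSup_le hne
        rintro y ⟨j, _, rfl⟩
        exact hub j
      · exact le_csSup_of_le hbdd hmem hj₀v

/-- The sequence has `N + 1` terms; `T n x` is its `n`-th smallest term,
namely `x (σ ⟨n - 1, _⟩)` for any sorting permutation `σ`. -/
theorem T_eq_nth_smallest (N : ℕ) (x : Fin (N + 1) → ℝ)
    (σ : Equiv.Perm (Fin (N + 1))) (hσ : Monotone (x ∘ σ))
    (n : ℕ) (hn1 : 1 ≤ n) (hnN : n ≤ N + 1) :
    T n x = x (σ ⟨n - 1, by omega⟩) := by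
  exact key n N x σ hσ hn1 hnN
end

section
/- Let x : Fin N → ℝ, let σ be a permutation of {1,…,N} sorting x nondecreasingly, let 2 ≤ n ≤ N, and let j ∈ {1,…,N}. If j ∈ {σ(1),…,σ(n−1)}, then the (n−1)-th smallest term of the deleted sequence x^{(j)} equals x(σ(n)); if j ∉ {σ(1),…,σ(n−1)}, then the (n−1)-th smallest term of x^{(j)} equals x(σ(n−1)). -/
/-- The sequence `x` has `N + 1` terms; `σ` sorts `x`, `τ` sorts the sequence
obtained from `x` by deleting the term at index `j` (via `Fin.succAbove`).
The (1-based) `m`-th smallest term corresponds to the zero-based index `m - 1`.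
`j` is among the first `n - 1` sorted positions iff `∃ i, i.val < n - 1 ∧ σ i = j`. -/
theorem deleted_nth_smallest (N : ℕ) (x : Fin (N + 1) → ℝ)
    (σ : Equiv.Perm (Fin (N + 1))) (hσ : Monotone (x ∘ σ))
    (n : ℕ) (hn2 : 2 ≤ n) (hnN : n ≤ N + 1) (j : Fin (N + 1))
    (τ : Equiv.Perm (Fin N)) (hτ : Monotone ((x ∘ j.succAbove) ∘ τ)) :
    ((∃ i : Fin (N + 1), i.val < n - 1 ∧ σ i = j) →
        (x ∘ j.succAbove) (τ ⟨n - 2, by omega⟩) = x (σ ⟨n - 1, by omega⟩)) ∧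
    (¬ (∃ i : Fin (N + 1), i.val < n - 1 ∧ σ i = j) →
        (x ∘ j.succAbove) (τ ⟨n - 2, by omega⟩) = x (σ ⟨n - 2, by omega⟩)) := by
  set k : Fin (N + 1) := σ.symm j with hk
  have hσk : σ k = j := σ.apply_symm_apply j
  -- the option-level equivalence
  set e : Option (Fin N) ≃ Option (Fin N) :=
    (finSuccEquiv' k).symm.trans (σ.trans (finSuccEquiv' j)) with he
  set ρ : Equiv.Perm (Fin N) := Equiv.removeNone e with hρ
  have key : ∀ i : Fin N, j.succAbove (ρ i) = σ (k.succAbove i) := by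
    intro i
    have hne : σ (k.succAbove i) ≠ j := by
      rw [← hσk]
      exact fun h => (Fin.succAbove_ne k i) (σ.injective h)
    obtain ⟨m, hm⟩ := Fin.exists_succAbove_eq hne
    have hes : e (some i) = some m := by
      simp only [he, Equiv.trans_apply, finSuccEquiv'_symm_some]
      rw [← hm]
      exact finSuccEquiv'_succAbove j m
    have := Equiv.removeNone_some e ⟨m, hes⟩
    rw [hes] at this
    rw [← hρ] at this
    have : ρ i = m := Option.some_injective _ this
    rw [this, hm]
  have hρmono : Monotone ((x ∘ j.succAbove) ∘ ρ) := by
    intro a b hab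
    simp only [Function.comp_apply, key]
    exact hσ ((Fin.strictMono_succAbove k).monotone hab)
  have huniq := Tuple.unique_monotone hτ hρmono
  have hval : (x ∘ j.succAbove) (τ ⟨n - 2, by omega⟩)
      = x (σ (k.succAbove ⟨n - 2, by omega⟩)) := by
    have h2 := congrFun huniq ⟨n - 2, by omega⟩
    simp only [Function.comp_apply] at h2 ⊢
    rw [h2, key]
  constructor
  · rintro ⟨i, hi, hij⟩
    have hik : i = k := by rw [hk, ← hij, Equiv.symm_apply_apply]
    have hkval : (k : ℕ) < n - 1 := hik ▸ hi
    have hsa : k.succAbove ⟨n - 2, by omega⟩ = ⟨n - 1, by omega⟩ := by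
      rw [Fin.succAbove_of_le_castSucc]
      · exact Fin.ext (by simp; omega)
      · rw [Fin.le_castSucc_iff]
        exact Fin.lt_def.mpr (by simp; omega)
    rw [hval, hsa]
  · intro h
    have hkval : ¬ ((k : ℕ) < n - 1) := fun hc => h ⟨k, hc, hσk⟩
    have hsa : k.succAbove ⟨n - 2, by omega⟩ = ⟨n - 2, by omega⟩ := by
      rw [Fin.succAbove_of_castSucc_lt]
      · exact Fin.ext (by simp)
      · exact Fin.lt_def.mpr (by simp; omega)
    rw [hval, hsa]
end
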